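/- arXiv:2010.13831 — 3 statements merged into one kernel-verified Lean document; each statement's English description precedes it below -/
import Mathlib

section
/- Let G = (V, E, w) be a weighted undirected graph with nonnegative edge weights, and partition V into tiers T_j = {v : 2^j ≤ deg(v) < 2^{j+1}} for 0 ≤ j < ⌈log|V|⌉. Define d_{≤i}(u,v) as the length of the shortest path between u and v using only edges incident to at least one node of T_{≤i} = ∪_{k≤i} T_k. Then for any v ∈ T_i and u ∈ T_{≤i}, the true distance satisfies d(v,u) = min{ d_{≤i}(v,u), min_{w ∈ T_{>i}} ( d(v,w) + d_{≤i}(w,u) ) }. -/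
open scoped ENNReal

/-- Weight of a walk: sum of the weights of its edges. -/
noncomputable def walkWeight {V : Type} {G : SimpleGraph V} (w : Sym2 V → ℝ≥0∞)
    {a b : V} (p : G.Walk a b) : ℝ≥0∞ :=
  (p.edges.map w).sum

/-- Weighted shortest-path distance: infimum of walk weights (`⊤` if disconnected). -/
noncomputable def wdist {V : Type} (G : SimpleGraph V) (w : Sym2 V → ℝ≥0∞)
    (a b : V) : ℝ≥0∞ :=
  ⨅ p : G.Walk a b, walkWeight w p

/-- Shortest-path distance restricted to walks all of whose edges are incident
to a vertex satisfying `P`. -/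
noncomputable def rdist {V : Type} (G : SimpleGraph V) (w : Sym2 V → ℝ≥0∞)
    (P : V → Prop) (a b : V) : ℝ≥0∞ :=
  ⨅ p : {p : G.Walk a b // ∀ e ∈ p.edges, ∃ x ∈ e, P x}, walkWeight w p.1

/-- Membership in the union of tiers `T_j`, `j ≤ i`, where
`T_j = {v : 2^j ≤ deg v < 2^{j+1}}`. -/
def tierLE {V : Type} [Fintype V] (G : SimpleGraph V) [DecidableRel G.Adj]
    (i : ℕ) (x : V) : Prop :=
  ∃ j ≤ i, 2 ^ j ≤ G.degree x ∧ G.degree x < 2 ^ (j + 1)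

lemma walkWeight_nil {V : Type} {G : SimpleGraph V} (w : Sym2 V → ℝ≥0∞) {a : V} :
    walkWeight w (SimpleGraph.Walk.nil : G.Walk a a) = 0 := by
  simp [walkWeight]

lemma walkWeight_cons {V : Type} {G : SimpleGraph V} (w : Sym2 V → ℝ≥0∞)
    {a b c : V} (h : G.Adj a b) (p : G.Walk b c) :
    walkWeight w (SimpleGraph.Walk.cons h p) = w s(a, b) + walkWeight w p := by
  simp [walkWeight]

lemma walkWeight_append {V : Type} {G : SimpleGraph V} (w : Sym2 V → ℝ≥0∞)
    {a b c : V} (p : G.Walk a b) (q : G.Walk b c) :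
    walkWeight w (p.append q) = walkWeight w p + walkWeight w q := by
  simp [walkWeight]

lemma high_of_not_tierLE {V : Type} [Fintype V] {G : SimpleGraph V} [DecidableRel G.Adj]
    {i : ℕ} {x : V} (hx : ¬ tierLE G i x) (h1 : 0 < G.degree x) :
    2 ^ (i + 1) ≤ G.degree x := by
  by_contra h
  push_neg at h
  apply hx
  refine ⟨Nat.log 2 (G.degree x), ?_, Nat.pow_log_le_self 2 h1.ne', Nat.lt_pow_succ_log_self (by norm_num) _⟩
  have := Nat.log_lt_of_lt_pow h1.ne' h
  omega

lemma key_decomp {V : Type} [Fintype V] (G : SimpleGraph V) [DecidableRel G.Adj]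
    (w : Sym2 V → ℝ≥0∞) (i : ℕ) :
    ∀ {a b : V} (p : G.Walk a b),
      (∀ e ∈ p.edges, ∃ x ∈ e, tierLE G i x) ∨
      ∃ x : V, 2 ^ (i + 1) ≤ G.degree x ∧
        ∃ (q : G.Walk a x) (r : G.Walk x b),
          (∀ e ∈ r.edges, ∃ y ∈ e, tierLE G i y) ∧
          walkWeight w p = walkWeight w q + walkWeight w r := by
  intro a b p
  induction p with
  | nil => left; simp
  | @cons a c b h q ih =>
    rcases ih with hall | ⟨x, hx, q', r, hr, hw⟩
    · by_cases hac : tierLE G i a ∨ tierLE G i c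
      · left
        intro e he
        rw [SimpleGraph.Walk.edges_cons, List.mem_cons] at he
        rcases he with rfl | he
        · rcases hac with ha | hc
          · exact ⟨a, by simp, ha⟩
          · exact ⟨c, by simp, hc⟩
        · exact hall e he
      · push_neg at hac
        right
        refine ⟨c, high_of_not_tierLE hac.2 ?_, SimpleGraph.Walk.cons h SimpleGraph.Walk.nil, q, hall, ?_⟩
        · exact (G.degree_pos_iff_exists_adj c).2 ⟨a, h.symm⟩
        · simp [walkWeight_cons, walkWeight_nil]
    · right
      refine ⟨x, hx, SimpleGraph.Walk.cons h q', r, hr, ?_⟩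
      rw [walkWeight_cons, walkWeight_cons, hw, add_assoc]

/-- for `v ∈ T_i` and `u ∈ T_{≤i}`,
`d(v,u) = min( d_{≤i}(v,u), min_{w ∈ T_{>i}} d(v,w) + d_{≤i}(w,u) )`. -/
theorem stmt_2 {V : Type} [Fintype V] (G : SimpleGraph V) [DecidableRel G.Adj]
    (w : Sym2 V → ℝ≥0∞) (i : ℕ)
    (hi : i + 1 ≤ Nat.clog 2 (Fintype.card V))
    (v u : V)
    (hv : 2 ^ i ≤ G.degree v ∧ G.degree v < 2 ^ (i + 1))
    (hu : tierLE G i u) :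
    wdist G w v u =
      min (rdist G w (tierLE G i) v u)
        (⨅ x : {x : V // 2 ^ (i + 1) ≤ G.degree x},
          wdist G w v x + rdist G w (tierLE G i) x u) := by
  apply le_antisymm
  · refine le_min ?_ ?_
    · exact le_iInf fun p => iInf_le _ p.1
    · refine le_iInf fun x => ?_
      conv_rhs => rw [wdist, ENNReal.iInf_add]
      refine le_iInf fun q => ?_
      conv_rhs => rw [rdist, ENNReal.add_iInf]
      refine le_iInf fun r => ?_
      calc wdist G w v u ≤ walkWeight w (q.append r.1) := iInf_le _ _
        _ = walkWeight w q + walkWeight w r.1 := walkWeight_append w q r.1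
  · refine le_iInf fun p => ?_
    rcases key_decomp G w i p with hall | ⟨x, hx, q, r, hr, hw⟩
    · exact le_trans (min_le_left _ _) (iInf_le _ (⟨p, hall⟩ : {p : G.Walk v u // ∀ e ∈ p.edges, ∃ x ∈ e, tierLE G i x}))
    · refine le_trans (min_le_right _ _) ?_
      refine le_trans (iInf_le _ ⟨x, hx⟩) ?_
      rw [hw]
      exact add_le_add (iInf_le _ q) (iInf_le _ (⟨r, hr⟩ : {p : G.Walk x u // ∀ e ∈ p.edges, ∃ y ∈ e, tierLE G i y}))
end

section
/- Let G be an unweighted connected graph, v a node, ecc(v) = max_{u} d(v,u) its eccentricity, ε > 0, and h ≥ 1 an integer. Let M ⊆ V be a set of nodes such that every node on any shortest path from v to the farthest node u has a node of M within the last h hops of the path (i.e. some w ∈ M on a shortest v-u path with d(w,u) ≤ h). Define ẽcc(v) := max{ max_{w ∈ M} d(v,w), max_{x : d(v,x) ≤ (1+1/ε)h} d(v,x) }. Then ẽcc(v) ≤ ecc(v), and ẽcc(v) ≥ ecc(v)/(1+ε). -/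
open scoped Classical

/-- (1+ε)-approximation of the unweighted eccentricity of `v`:
`ẽcc(v) = max( max_{w ∈ M} d(v,w), max_{x : d(v,x) ≤ (1+1/ε)h} d(v,x) )`
satisfies `ecc(v)/(1+ε) ≤ ẽcc(v) ≤ ecc(v)`, provided every farthest node `u` has a
node of `M` on some shortest `v`-`u` path within the last `h` hops. -/
theorem stmt_5 {V : Type} [Fintype V] (G : SimpleGraph V) (hconn : G.Connected)
    (v : V) (ε : ℝ) (hε : 0 < ε) (h : ℕ) (hh : 1 ≤ h) (M : Finset V)
    (hM : ∀ u : V, Finset.univ.sup (G.dist v) = G.dist v u →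
      ∃ w ∈ M, G.dist v w + G.dist w u = G.dist v u ∧ G.dist w u ≤ h) :
    let ecc : ℕ := Finset.univ.sup (G.dist v)
    let tecc : ℕ := max (M.sup (G.dist v))
      ((Finset.univ.filter fun x : V => (G.dist v x : ℝ) ≤ (1 + 1 / ε) * (h : ℝ)).sup
        (G.dist v))
    (tecc : ℝ) ≤ (ecc : ℝ) ∧ (ecc : ℝ) / (1 + ε) ≤ (tecc : ℝ) := by
  intro ecc tecc
  have hecc_le : tecc ≤ ecc := by
    apply max_le
    · exact Finset.sup_mono (Finset.subset_univ M)
    · exact Finset.sup_mono (Finset.filter_subset _ _)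
  refine ⟨by exact_mod_cast hecc_le, ?_⟩
  have h1ε : (0:ℝ) < 1 + ε := by linarith
  rw [div_le_iff₀ h1ε]
  -- pick u attaining the eccentricity
  obtain ⟨u, -, hu⟩ := Finset.exists_mem_eq_sup (Finset.univ : Finset V)
    ⟨v, Finset.mem_univ v⟩ (G.dist v)
  by_cases hcase : (ecc : ℝ) ≤ (1 + 1 / ε) * (h : ℝ)
  · -- u is in the filter set, so tecc ≥ ecc
    have hmem : u ∈ Finset.univ.filter fun x : V => (G.dist v x : ℝ) ≤ (1 + 1 / ε) * (h : ℝ) := by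
      simp only [Finset.mem_filter, Finset.mem_univ, true_and]
      rw [← hu]; exact hcase
    have h2 : G.dist v u ≤ tecc := le_max_of_le_right (Finset.le_sup (f := G.dist v) hmem)
    have : ecc ≤ tecc := by rw [show ecc = G.dist v u from hu]; exact h2
    have : (ecc : ℝ) ≤ tecc := by exact_mod_cast this
    nlinarith [Nat.cast_nonneg (α := ℝ) tecc]
  · push_neg at hcase
    obtain ⟨w, hwM, hsum, hwu⟩ := hM u hu
    have hvw : ecc ≤ G.dist v w + h := by
      calc ecc = G.dist v u := hu
        _ = G.dist v w + G.dist w u := hsum.symm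
        _ ≤ G.dist v w + h := by omega
    have htecc : (G.dist v w : ℝ) ≤ tecc := by
      exact_mod_cast le_max_of_le_left (Finset.le_sup (f := G.dist v) hwM)
    have hvwR : (ecc : ℝ) ≤ (G.dist v w : ℝ) + h := by exact_mod_cast hvw
    -- from hcase: ecc > (1+1/ε)h, i.e. ε * ecc > (1+ε)h, so h < ε*ecc/(1+ε)
    have hεh : (1 + ε) * (h : ℝ) < ε * ecc := by
      have h2 : ε * ((1 + 1 / ε) * (h : ℝ)) < ε * ecc := mul_lt_mul_of_pos_left hcase hε
      have h3 : ε * ((1 + 1 / ε) * (h : ℝ)) = (1 + ε) * h := by field_simp; exact add_comm ε 1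
      linarith
    nlinarith
end

section
/- Let G = (V,E,w) be a connected weighted undirected graph with nonnegative weights, u ∈ V, and M ⊆ V a set of nodes and h ≥ 1 such that the farthest node p from u (ecc(u) = d(u,p)) has some node p' ∈ M with hop(p,p') ≤ h. For v ∈ M define ecc_h(v) := max_{x ∈ N^h(v)} d(v,x), where N^h(v) is the h-hop neighborhood of v. Then the value ẽcc(u) := (1/3)·max_{v ∈ M} ( d(u,v) + ecc_h(v) ) satisfies ecc(u)/3 ≤ ẽcc(u) ≤ ecc(u). -/
/-- 3-approximation of weighted eccentricity. `d` is an abstract weighted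
distance (nonnegative, symmetric, triangle inequality), hop distances are those of the
graph `G`. If the farthest node `p` from `u` has a skeleton node `p' ∈ M` within `h`
hops, then `ẽcc(u) = (1/3)·max_{v ∈ M} ( d(u,v) + ecc_h(v) )`, where
`ecc_h(v) = max_{x ∈ N^h(v)} d(v,x)`, satisfies `ecc(u)/3 ≤ ẽcc(u) ≤ ecc(u)`. -/
theorem stmt_6 {V : Type} [Fintype V] [Nonempty V] (G : SimpleGraph V)
    (hconn : G.Connected)
    (d : V → V → ℝ)
    (hnn : ∀ a b, 0 ≤ d a b)
    (hself : ∀ a, d a a = 0)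
    (hsymm : ∀ a b, d a b = d b a)
    (htri : ∀ a b c, d a c ≤ d a b + d b c)
    (M : Set V) (h : ℕ) (u : V)
    (hp : ∃ p : V, d u p = sSup (Set.range (d u)) ∧ ∃ p' ∈ M, G.dist p p' ≤ h) :
    let ecch : V → ℝ := fun v => sSup {t : ℝ | ∃ x : V, G.dist v x ≤ h ∧ t = d v x}
    let tecc : ℝ := (1 / 3) * sSup {r : ℝ | ∃ v ∈ M, r = d u v + ecch v}
    sSup (Set.range (d u)) / 3 ≤ tecc ∧ tecc ≤ sSup (Set.range (d u)) := by
  intro ecch tecc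
  obtain ⟨p, hpecc, p', hp'M, hpp'⟩ := hp
  set ecc := sSup (Set.range (d u)) with hecc
  -- basic finiteness / bddAbove facts
  have hranfin : ∀ w : V, (Set.range (d w)).Finite := fun w => Set.finite_range _
  have hrange_bdd : ∀ w : V, BddAbove (Set.range (d w)) := fun w => (hranfin w).bddAbove
  have hecc_le : ∀ x, d u x ≤ ecc := fun x =>
    le_csSup (hrange_bdd u) ⟨x, rfl⟩
  have hecc_nn : 0 ≤ ecc := by have := hecc_le u; rw [hself u] at this; exact this
  -- ecch sets
  have hsubset : ∀ v : V, {t : ℝ | ∃ x : V, G.dist v x ≤ h ∧ t = d v x} ⊆ Set.range (d v) := by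
    rintro v t ⟨x, _, rfl⟩; exact ⟨x, rfl⟩
  have hecch_bdd : ∀ v, BddAbove {t : ℝ | ∃ x : V, G.dist v x ≤ h ∧ t = d v x} :=
    fun v => ((hranfin v).subset (hsubset v)).bddAbove
  have hecch_le : ∀ v x, G.dist v x ≤ h → d v x ≤ ecch v := fun v x hx =>
    le_csSup (hecch_bdd v) ⟨x, hx, rfl⟩
  -- the big set
  have hSeq : {r : ℝ | ∃ v ∈ M, r = d u v + ecch v} = (fun v => d u v + ecch v) '' M := by
    ext r; constructor
    · rintro ⟨v, hv, rfl⟩; exact ⟨v, hv, rfl⟩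
    · rintro ⟨v, hv, rfl⟩; exact ⟨v, hv, rfl⟩
  have hSfin : {r : ℝ | ∃ v ∈ M, r = d u v + ecch v}.Finite := by
    rw [hSeq]; exact (Set.toFinite M).image _
  have hSbdd : BddAbove {r : ℝ | ∃ v ∈ M, r = d u v + ecch v} := hSfin.bddAbove
  constructor
  · -- lower bound: d u p' + ecch p' ≥ d u p = ecc
    have h1 : d p' p ≤ ecch p' := hecch_le p' p (by rwa [G.dist_comm])
    have h2 : ecc ≤ d u p' + ecch p' := by
      have := htri u p' p; linarith
    have h3 : d u p' + ecch p' ≤ sSup {r : ℝ | ∃ v ∈ M, r = d u v + ecch v} :=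
      le_csSup hSbdd ⟨p', hp'M, rfl⟩
    show ecc / 3 ≤ (1 / 3) * sSup {r : ℝ | ∃ v ∈ M, r = d u v + ecch v}
    linarith
  · -- upper bound
    have hub : ∀ r ∈ {r : ℝ | ∃ v ∈ M, r = d u v + ecch v}, r ≤ 3 * ecc := by
      rintro r ⟨v, hv, rfl⟩
      have hecchv : ecch v ≤ 2 * ecc := by
        have hne' : {t : ℝ | ∃ x : V, G.dist v x ≤ h ∧ t = d v x}.Nonempty :=
          ⟨d v v, v, by rw [SimpleGraph.dist_self]; exact Nat.zero_le h, rfl⟩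
        apply csSup_le hne'
        rintro t ⟨x, hx, rfl⟩
        calc d v x ≤ d v u + d u x := htri v u x
          _ ≤ ecc + ecc := by
              have := hecc_le v; have := hecc_le x; rw [hsymm v u]; linarith
          _ = 2 * ecc := by ring
      have := hecc_le v; linarith
    by_cases hne : {r : ℝ | ∃ v ∈ M, r = d u v + ecch v}.Nonempty
    · have := csSup_le hne hub
      show (1 / 3) * sSup {r : ℝ | ∃ v ∈ M, r = d u v + ecch v} ≤ ecc
      linarith
    · rw [Set.not_nonempty_iff_eq_empty] at hne
      show (1 / 3) * sSup {r : ℝ | ∃ v ∈ M, r = d u v + ecch v} ≤ ecc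
      rw [hne, Real.sSup_empty]; linarith
end
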